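/- For every fixed R > 0, lim_{k→∞} (h_k(R) + j_k(R))/k = 1/4, where the limit is taken over integers k → ∞. -/

import Mathlib

open Real Filter Topology


/-- The modified Bessel function of the first kind of order `m`:
`I_m(r) = ∑ (r/2)^(m+2n) / (n! Γ(m+n+1))`. -/
noncomputable def besselI (m r : ℝ) : ℝ :=
  ∑' n : ℕ, (r / 2) ^ (m + 2 * (n : ℝ)) / ((n.factorial : ℝ) * Real.Gamma (m + (n : ℝ) + 1))

/-- `h_k(R) = ((k²+k)/2 - 1)·I_{k+3/2}(R)/(R·I_{k+1/2}(R))`. -/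
noncomputable def hfun (k : ℕ) (R : ℝ) : ℝ :=
  (((k : ℝ) ^ 2 + k) / 2 - 1) * (besselI ((k : ℝ) + 3 / 2) R / (R * besselI ((k : ℝ) + 1 / 2) R))

/-- `j_k(R) = 1 - 3 I_{3/2}(R)/(R I_{1/2}(R)) - I_{3/2}(R) I_{k+3/2}(R)/(I_{1/2}(R) I_{k+1/2}(R))`. -/
noncomputable def jfun (k : ℕ) (R : ℝ) : ℝ :=
  1 - 3 * besselI (3 / 2) R / (R * besselI (1 / 2) R)
    - besselI (3 / 2) R * besselI ((k : ℝ) + 3 / 2) R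
      / (besselI (1 / 2) R * besselI ((k : ℝ) + 1 / 2) R)


lemma gamma_ratio (m : ℝ) (hm : 0 ≤ m) (n : ℕ) :
    Real.Gamma (m + 1) * (m + 1) ^ n ≤ Real.Gamma (m + n + 1) := by
  induction n with
  | zero => simp
  | succ n ih =>
    have h1 : (0:ℝ) < m + n + 1 := by positivity
    have hrw : m + ((n : ℕ) + 1 : ℕ) + 1 = (m + n + 1) + 1 := by push_cast; ring
    rw [hrw, Real.Gamma_add_one h1.ne']
    have hg : 0 ≤ Real.Gamma (m+1) * (m+1)^n :=
      mul_nonneg (Real.Gamma_pos_of_pos (by positivity)).le (by positivity)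
    calc Real.Gamma (m+1) * (m+1)^(n+1)
        = (m+1) * (Real.Gamma (m+1) * (m+1)^n) := by ring
      _ ≤ (m + n + 1) * Real.Gamma (m+n+1) := by
          apply mul_le_mul (by linarith [Nat.cast_nonneg (α := ℝ) n]) ih hg h1.le

lemma term_eq (m R : ℝ) (hR : 0 < R) (n : ℕ) :
    (R/2) ^ (m + 2*(n:ℝ)) = (R/2)^m * ((R/2)^2)^n := by
  rw [Real.rpow_add (by positivity)]
  congr 1
  rw [show (2*(n:ℝ)) = ((2*n : ℕ) : ℝ) by push_cast; ring, Real.rpow_natCast, pow_mul]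

lemma term_bound (m R : ℝ) (hm : 0 ≤ m) (hR : 0 < R) (n : ℕ) :
    (R/2) ^ (m + 2*(n:ℝ)) / ((n.factorial : ℝ) * Real.Gamma (m + n + 1))
      ≤ (R/2)^m / Real.Gamma (m+1) * (((R/2)^2/(m+1))^n / n.factorial) := by
  have hG1 : (0:ℝ) < Real.Gamma (m+1) := Real.Gamma_pos_of_pos (by positivity)
  have hfac : (0:ℝ) < n.factorial := by positivity
  have hrhs : (R/2)^m / Real.Gamma (m+1) * (((R/2)^2/(m+1))^n / n.factorial)
      = (R/2)^m * ((R/2)^2)^n / ((n.factorial : ℝ) * (Real.Gamma (m+1) * (m+1)^n)) := by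
    rw [div_pow]; ring
  rw [term_eq m R hR, hrhs]
  gcongr
  exact gamma_ratio m hm n

lemma besselI_summable (m R : ℝ) (hm : 0 ≤ m) (hR : 0 < R) :
    Summable (fun n : ℕ =>
      (R/2) ^ (m + 2*(n:ℝ)) / ((n.factorial : ℝ) * Real.Gamma (m + n + 1))) := by
  apply Summable.of_nonneg_of_le ?_ (term_bound m R hm hR)
  · exact (Real.summable_pow_div_factorial _).mul_left _
  · intro n
    have hG : (0:ℝ) < Real.Gamma (m + n + 1) := Real.Gamma_pos_of_pos (by positivity)
    positivity

lemma term_nonneg (m R : ℝ) (hm : 0 ≤ m) (hR : 0 < R) (n : ℕ) :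
    0 ≤ (R/2) ^ (m + 2*(n:ℝ)) / ((n.factorial : ℝ) * Real.Gamma (m + n + 1)) := by
  have hG : (0:ℝ) < Real.Gamma (m + n + 1) := Real.Gamma_pos_of_pos (by positivity)
  positivity

lemma besselI_lower (m R : ℝ) (hm : 0 ≤ m) (hR : 0 < R) :
    (R/2)^m / Real.Gamma (m+1) ≤ besselI m R := by
  have := Summable.le_tsum (besselI_summable m R hm hR) 0 (fun n _ => term_nonneg m R hm hR n)
  simpa [besselI] using this

lemma besselI_pos (m R : ℝ) (hm : 0 ≤ m) (hR : 0 < R) : 0 < besselI m R := by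
  refine lt_of_lt_of_le ?_ (besselI_lower m R hm hR)
  have hG1 : (0:ℝ) < Real.Gamma (m+1) := Real.Gamma_pos_of_pos (by positivity)
  positivity

lemma besselI_upper (m R : ℝ) (hm : 0 ≤ m) (hR : 0 < R) :
    besselI m R ≤ (R/2)^m / Real.Gamma (m+1) * Real.exp ((R/2)^2/(m+1)) := by
  have hexp : Real.exp ((R/2)^2/(m+1)) = ∑' n : ℕ, ((R/2)^2/(m+1))^n / n.factorial := by
    rw [Real.exp_eq_exp_ℝ, NormedSpace.exp_eq_tsum_div]
  rw [hexp, ← tsum_mul_left]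
  exact Summable.tsum_le_tsum (term_bound m R hm hR) (besselI_summable m R hm hR)
    ((Real.summable_pow_div_factorial _).mul_left _)

lemma ratio_le (m R : ℝ) (hm : 0 ≤ m) (hR : 0 < R) :
    besselI (m+1) R / besselI m R ≤ (R/2)/(m+1) := by
  rw [div_le_iff₀ (besselI_pos m R hm hR)]
  have h : besselI (m+1) R ≤ (R/2)/(m+1) * besselI m R := by
    unfold besselI
    rw [← tsum_mul_left]
    apply Summable.tsum_le_tsum ?_ (besselI_summable (m+1) R (by linarith) hR)
      ((besselI_summable m R hm hR).mul_left _)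
    intro n
    have e1 : (R/2:ℝ)^((m+1)+2*(n:ℝ)) = (R/2) * (R/2)^(m+2*(n:ℝ)) := by
      rw [show (m+1)+2*(n:ℝ) = (m+2*(n:ℝ))+1 by ring,
        Real.rpow_add_one (by positivity : (R/2:ℝ) ≠ 0)]
      ring
    have e2 : Real.Gamma ((m+1)+(n:ℝ)+1) = (m+(n:ℝ)+1) * Real.Gamma (m+(n:ℝ)+1) := by
      rw [show (m+1)+(n:ℝ)+1 = (m+(n:ℝ)+1)+1 by ring,
        Real.Gamma_add_one (by positivity : (m+(n:ℝ)+1) ≠ 0)]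
    rw [e1, e2]
    have hT : (0:ℝ) ≤ (R/2) * ((R/2)^(m+2*(n:ℝ)) / ((n.factorial:ℝ) * Real.Gamma (m+(n:ℝ)+1))) := by
      have := term_nonneg m R hm hR n; positivity
    have lhs_eq : (R/2) * (R/2)^(m+2*(n:ℝ)) / ((n.factorial:ℝ) * ((m+(n:ℝ)+1) * Real.Gamma (m+(n:ℝ)+1)))
        = ((R/2) * ((R/2)^(m+2*(n:ℝ)) / ((n.factorial:ℝ) * Real.Gamma (m+(n:ℝ)+1)))) / (m+(n:ℝ)+1) := by
      have h1 : ((n.factorial:ℝ)) ≠ 0 := by positivity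
      have h2 : Real.Gamma (m+(n:ℝ)+1) ≠ 0 := (Real.Gamma_pos_of_pos (by positivity)).ne'
      have h3 : (m+(n:ℝ)+1) ≠ 0 := by positivity
      field_simp
    have rhs_eq : (R/2)/(m+1) * ((R/2)^(m+2*(n:ℝ)) / ((n.factorial:ℝ) * Real.Gamma (m+(n:ℝ)+1)))
        = ((R/2) * ((R/2)^(m+2*(n:ℝ)) / ((n.factorial:ℝ) * Real.Gamma (m+(n:ℝ)+1)))) / (m+1) := by
      have h1 : ((n.factorial:ℝ)) ≠ 0 := by positivity
      have h2 : Real.Gamma (m+(n:ℝ)+1) ≠ 0 := (Real.Gamma_pos_of_pos (by positivity)).ne'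
      have h3 : (m+1:ℝ) ≠ 0 := by positivity
      field_simp
    rw [lhs_eq, rhs_eq]
    gcongr
    linarith [Nat.cast_nonneg (α := ℝ) n]
  exact h

lemma ratio_ge (m R : ℝ) (hm : 0 ≤ m) (hR : 0 < R) :
    (R/2)/((m+1) * Real.exp ((R/2)^2/(m+1))) ≤ besselI (m+1) R / besselI m R := by
  rw [le_div_iff₀ (besselI_pos m R hm hR)]
  have hE : (0:ℝ) < Real.exp ((R/2)^2/(m+1)) := Real.exp_pos _
  have hcoef : (0:ℝ) ≤ (R/2)/((m+1) * Real.exp ((R/2)^2/(m+1))) := by positivity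
  calc (R/2)/((m+1) * Real.exp ((R/2)^2/(m+1))) * besselI m R
      ≤ (R/2)/((m+1) * Real.exp ((R/2)^2/(m+1)))
          * ((R/2)^m / Real.Gamma (m+1) * Real.exp ((R/2)^2/(m+1))) :=
        mul_le_mul_of_nonneg_left (besselI_upper m R hm hR) hcoef
    _ = (R/2)^(m+1) / Real.Gamma ((m+1)+1) := by
        rw [Real.rpow_add_one (by positivity : (R/2:ℝ) ≠ 0),
          Real.Gamma_add_one (by positivity : (m+1:ℝ) ≠ 0)]
        field_simp
    _ ≤ besselI (m+1) R := besselI_lower (m+1) R (by linarith) hR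

/-- `(h_k(R) + j_k(R))/k → 1/4` as the integer `k → ∞`. -/
theorem stmt9 (R : ℝ) (hR : 0 < R) :
    Filter.Tendsto (fun k : ℕ => (hfun k R + jfun k R) / (k : ℝ))
      Filter.atTop (nhds (1 / 4)) := by
  have hRne : R ≠ 0 := hR.ne'
  set c : ℝ := R/2 with hc
  set ρ : ℕ → ℝ := fun k => besselI ((k:ℝ)+3/2) R / besselI ((k:ℝ)+1/2) R with hρdef
  have hub : ∀ k : ℕ, ρ k ≤ c/((k:ℝ)+3/2) := by
    intro k
    have h := ratio_le ((k:ℝ)+1/2) R (by positivity) hR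
    have h32 : (k:ℝ)+1/2+1 = (k:ℝ)+3/2 := by ring
    rw [h32] at h
    exact h
  have hlb : ∀ k : ℕ, c/(((k:ℝ)+3/2) * Real.exp (c^2/((k:ℝ)+3/2))) ≤ ρ k := by
    intro k
    have h := ratio_ge ((k:ℝ)+1/2) R (by positivity) hR
    have h32 : (k:ℝ)+1/2+1 = (k:ℝ)+3/2 := by ring
    rw [h32] at h
    exact h
  have hρnn : ∀ k : ℕ, 0 ≤ ρ k := fun k =>
    div_nonneg (besselI_pos _ R (by positivity) hR).le (besselI_pos _ R (by positivity) hR).le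
  have hden : Tendsto (fun k : ℕ => (k:ℝ)+3/2) atTop atTop :=
    tendsto_atTop_add_const_right _ _ tendsto_natCast_atTop_atTop
  have hub0 : Tendsto (fun k : ℕ => c/((k:ℝ)+3/2)) atTop (nhds 0) :=
    Tendsto.div_atTop tendsto_const_nhds hden
  have hρ0 : Tendsto ρ atTop (nhds 0) := squeeze_zero hρnn hub hub0
  have hE : Tendsto (fun k : ℕ => Real.exp (c^2/((k:ℝ)+3/2))) atTop (nhds 1) := by
    have h0 : Tendsto (fun k : ℕ => c^2/((k:ℝ)+3/2)) atTop (nhds 0) :=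
      Tendsto.div_atTop tendsto_const_nhds hden
    have := (Real.continuous_exp.tendsto 0).comp h0
    simpa [Function.comp_def] using this
  set g : ℕ → ℝ := fun k => (((k:ℝ)^2+k)/2 - 1)/(R*k) with hgdef
  have hgnn : ∀ k : ℕ, 1 ≤ k → 0 ≤ g k := by
    intro k hk
    have hk1 : (1:ℝ) ≤ (k:ℝ) := by exact_mod_cast hk
    exact div_nonneg (by nlinarith) (by positivity)
  have h1k : Tendsto (fun k:ℕ => 1/(k:ℝ)) atTop (nhds 0) := tendsto_one_div_atTop_nhds_zero_nat
  have hV : Tendsto (fun k : ℕ => (1 + (1/(k:ℝ)) - 2*(1/(k:ℝ))^2)/(4 + 6*(1/(k:ℝ))))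
      atTop (nhds (1/4)) := by
    have h := ((tendsto_const_nhds (x := (1:ℝ)) (f := atTop)).add h1k |>.sub
      ((h1k.pow 2).const_mul 2)).div
      ((tendsto_const_nhds (x := (4:ℝ)) (f := atTop)).add (h1k.const_mul 6)) (by norm_num)
    convert h using 2 <;> norm_num
  have hU : Tendsto (fun k : ℕ => g k * (c/((k:ℝ)+3/2))) atTop (nhds (1/4)) := by
    apply hV.congr'
    filter_upwards [eventually_ge_atTop 1] with k hk
    have hk0 : (k:ℝ) ≠ 0 := by
      have : (0:ℕ) < k := hk
      exact_mod_cast this.ne'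
    have h32 : ((k:ℝ)+3/2) ≠ 0 := by positivity
    simp only [hgdef, hc]
    field_simp
    ring
  have hL : Tendsto (fun k : ℕ => g k * (c/(((k:ℝ)+3/2) * Real.exp (c^2/((k:ℝ)+3/2)))))
      atTop (nhds (1/4)) := by
    have h := hU.div hE one_ne_zero
    norm_num at h
    apply h.congr
    intro k
    have h32 : ((k:ℝ)+3/2) ≠ 0 := by positivity
    have hEne : Real.exp (c^2/((k:ℝ)+3/2)) ≠ 0 := (Real.exp_pos _).ne'
    simp only [Pi.div_apply]
    field_simp
  have hT1 : Tendsto (fun k : ℕ => g k * ρ k) atTop (nhds (1/4)) := by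
    apply tendsto_of_tendsto_of_tendsto_of_le_of_le' hL hU
    · filter_upwards [eventually_ge_atTop 1] with k hk
      exact mul_le_mul_of_nonneg_left (hlb k) (hgnn k hk)
    · filter_upwards [eventually_ge_atTop 1] with k hk
      exact mul_le_mul_of_nonneg_left (hub k) (hgnn k hk)
  have hT2 : Tendsto (fun k : ℕ => (1 - 3*besselI (3/2) R/(R*besselI (1/2) R)
      - (besselI (3/2) R / besselI (1/2) R) * ρ k) * (1/(k:ℝ))) atTop (nhds 0) := by
    have h := ((tendsto_const_nhds
        (x := (1 - 3*besselI (3/2) R/(R*besselI (1/2) R) : ℝ)) (f := atTop (α := ℕ))).sub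
      (hρ0.const_mul (besselI (3/2) R / besselI (1/2) R))).mul h1k
    simpa only [mul_zero] using h
  have key : ∀ k : ℕ, (hfun k R + jfun k R)/(k:ℝ)
      = g k * ρ k + (1 - 3*besselI (3/2) R/(R*besselI (1/2) R)
        - (besselI (3/2) R / besselI (1/2) R) * ρ k) * (1/(k:ℝ)) := by
    intro k
    simp only [hfun, jfun, hgdef, hρdef]
    ring
  have hfin := hT1.add hT2
  rw [add_zero] at hfin
  exact hfin.congr (fun k => (key k).symm)
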